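/- Let X = (a_{ij}) be an l×l integer matrix, and let Q̃, T̃ be unimodular integer matrices with Q̃XT̃ = diag(a_1,…,a_l). Form the block matrices P(Y) = ⊕_{λ} S^{m_1(λ)}(Y) ⊗ S^{m_2(λ)}(Y) ⊗ ⋯ over partitions λ = (1^{m_1}2^{m_2}⋯) of a fixed size, where S^m denotes the m-th symmetric power of a matrix. Then P(Q̃) P(X) P(T̃) = P(diag(a_1,…,a_l)), and in particular P(Q̃) and P(T̃) are unimodular, so the invariant factors of P(X) are the products a_1^{ℓ(λ^{(1)})} ⋯ a_l^{ℓ(λ^{(l)})} over l-multipartitions (λ^{(1)},…,λ^{(l)}) of total size d. -/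

import Mathlib

open MvPolynomial

noncomputable section

/-- The entry of the `m`-th symmetric power `S^m(Y)` of an `l × l` matrix `Y`, in the basis of
monomials indexed by weakly increasing `m`-tuples (i.e. multisets of size `m`): the `(a, b)`
entry is the coefficient of `x^a` in `∏_i (∑_j Y_{ji} x_j)^{b_i}`. -/
def symPowEntry {l m : ℕ} (Y : Matrix (Fin l) (Fin l) ℤ) (a b : Sym (Fin l) m) : ℤ :=
  MvPolynomial.coeff
    (Finsupp.equivFunOnFinite.symm fun i => Multiset.count i (a : Multiset (Fin l)))
    (∏ i : Fin l,
      (∑ j : Fin l, MvPolynomial.C (Y j i) * MvPolynomial.X j) ^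
        Multiset.count i (b : Multiset (Fin l)))

/-- The index set of the block matrix `P(Y) = ⊕_{λ ⊢ d} S^{m_1(λ)}(Y) ⊗ S^{m_2(λ)}(Y) ⊗ ⋯`:
a partition `λ` of `d` together with, for each part size `r`, a multiset of `m_r(λ)` colors
from `{1, …, l}`.  These data are in bijection with `l`-multipartitions of `d`. -/
abbrev PartIdx (d l : ℕ) : Type :=
  (lam : d.Partition) × ((r : Fin (d + 1)) → Sym (Fin l) (lam.parts.count (r : ℕ)))

/-- The block matrix `P(Y) = ⊕_{λ ⊢ d} S^{m_1(λ)}(Y) ⊗ S^{m_2(λ)}(Y) ⊗ ⋯`. -/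
def blockP {d l : ℕ} (Y : Matrix (Fin l) (Fin l) ℤ) :
    Matrix (PartIdx d l) (PartIdx d l) ℤ := fun q q' =>
  if h : q.1 = q'.1 then
    ∏ r : Fin (d + 1), symPowEntry Y (q.2 r) (cast (by rw [h]) (q'.2 r))
  else 0

namespace BlockPAux
variable {l : ℕ}

def toF {m : ℕ} (a : Sym (Fin l) m) : Fin l →₀ ℕ :=
  Finsupp.equivFunOnFinite.symm fun i => Multiset.count i (a : Multiset (Fin l))

lemma toF_apply {m : ℕ} (a : Sym (Fin l) m) (i : Fin l) :
    toF a i = Multiset.count i (a : Multiset (Fin l)) := rfl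

lemma toF_injective {m : ℕ} : Function.Injective (toF (l := l) (m := m)) := by
  intro a b h
  apply Sym.coe_injective
  rw [Multiset.ext]
  intro i
  simpa [toF_apply] using DFunLike.congr_fun h i

lemma sum_toF {m : ℕ} (b : Sym (Fin l) m) : ∑ i : Fin l, toF b i = m := by
  simp only [toF_apply]
  rw [← Finset.sum_subset ((b : Multiset (Fin l)).toFinset.subset_univ)
    (fun x _ hx => by simpa [Multiset.count_eq_zero] using hx),
    Multiset.toFinset_sum_count_eq]
  exact b.prop

def F (Y : Matrix (Fin l) (Fin l) ℤ) (i : Fin l) : MvPolynomial (Fin l) ℤ :=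
  ∑ j : Fin l, C (Y j i) * X j

lemma symPowEntry_eq {m : ℕ} (Y : Matrix (Fin l) (Fin l) ℤ) (a b : Sym (Fin l) m) :
    symPowEntry Y a b = coeff (toF a) (aeval (F Y) (monomial (toF b) (1 : ℤ))) := by
  rw [aeval_monomial, Finsupp.prod_pow]
  simp [symPowEntry, toF_apply, F, toF]


lemma degree_toF {m : ℕ} (b : Sym (Fin l) m) : (toF b).degree = m := by
  rw [Finsupp.degree_apply,
    Finset.sum_subset ((toF b).support.subset_univ)
      (fun x _ hx => by simpa using Finsupp.notMem_support_iff.mp hx)]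
  exact sum_toF b

lemma isHomogeneous_aeval_F {m : ℕ} (Z : Matrix (Fin l) (Fin l) ℤ) (b : Sym (Fin l) m) :
    (aeval (F Z) (monomial (toF b) (1 : ℤ))).IsHomogeneous m := by
  rw [aeval_monomial, Finsupp.prod_pow, map_one, one_mul]
  have := MvPolynomial.IsHomogeneous.prod Finset.univ (fun i => F Z i ^ (toF b i))
    (fun i => toF b i) (fun i _ => by
      simpa [F] using (MvPolynomial.IsHomogeneous.sum Finset.univ _ 1
        (fun j _ => MvPolynomial.isHomogeneous_C_mul_X (Z j i) j) :
          (F Z i).IsHomogeneous 1).pow (toF b i))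
  rwa [sum_toF b] at this

lemma aeval_F_comp (Y Z : Matrix (Fin l) (Fin l) ℤ) (p : MvPolynomial (Fin l) ℤ) :
    aeval (F Y) (aeval (F Z) p) = aeval (F (Y * Z)) p := by
  have : (aeval (F Y)).comp (aeval (F Z)) =
      (aeval (F (Y * Z)) : MvPolynomial (Fin l) ℤ →ₐ[ℤ] MvPolynomial (Fin l) ℤ) := by
    apply MvPolynomial.algHom_ext
    intro i
    simp only [AlgHom.comp_apply, aeval_X, F, map_sum, map_mul, aeval_C, algebraMap_eq,
      Matrix.mul_apply, Finset.mul_sum]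
    rw [Finset.sum_comm]
    refine Finset.sum_congr rfl fun j _ => ?_
    rw [Finset.sum_mul]
    refine Finset.sum_congr rfl fun k _ => ?_
    ring
  exact DFunLike.congr_fun this p

lemma symPowEntry_mul {m : ℕ} (Y Z : Matrix (Fin l) (Fin l) ℤ) (a b : Sym (Fin l) m) :
    symPowEntry (Y * Z) a b = ∑ c : Sym (Fin l) m, symPowEntry Y a c * symPowEntry Z c b := by
  set p := aeval (F Z) (monomial (toF b) (1 : ℤ)) with hp
  have hph : p.IsHomogeneous m := isHomogeneous_aeval_F Z b
  have key : ∀ u : Fin l →₀ ℕ,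
      coeff (toF a) (aeval (F Y) (monomial u (coeff u p))) =
      coeff u p * coeff (toF a) (aeval (F Y) (monomial u (1 : ℤ))) := by
    intro u
    rw [aeval_monomial, aeval_monomial, map_one, one_mul]
    simp only [MvPolynomial.algebraMap_eq]
    rw [coeff_C_mul]
  rw [symPowEntry_eq, ← aeval_F_comp, ← hp]
  conv_lhs => rw [p.as_sum]
  rw [map_sum, coeff_sum]
  simp_rw [key]
  have hsub : p.support ⊆ Finset.univ.image (toF (l := l) (m := m)) := by
    intro u hu
    have hdeg : u.degree = m := by
      rw [Finsupp.degree_eq_weight_one]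
      exact hph (MvPolynomial.mem_support_iff.mp hu)
    have hcard : Multiset.card (Finsupp.toMultiset u) = m := by
      rw [Finsupp.card_toMultiset]
      simpa [Finsupp.degree_apply, Finsupp.sum] using hdeg
    refine Finset.mem_image.mpr ⟨⟨Finsupp.toMultiset u, hcard⟩, Finset.mem_univ _, ?_⟩
    ext i
    exact Finsupp.count_toMultiset u i
  rw [Finset.sum_subset hsub (fun u _ hu => by
    rw [MvPolynomial.notMem_support_iff.mp hu, zero_mul]),
    Finset.sum_image (fun x _ y _ h => toF_injective h)]
  refine Finset.sum_congr rfl fun c _ => ?_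
  rw [symPowEntry_eq, symPowEntry_eq, ← hp, mul_comm]
lemma symPowEntry_diagonal {m : ℕ} (v : Fin l → ℤ) (b c : Sym (Fin l) m) :
    symPowEntry (Matrix.diagonal v) b c =
      if b = c then ∏ k : Fin l, v k ^ Multiset.count k (c : Multiset (Fin l)) else 0 := by
  have hF : ∀ i : Fin l, F (Matrix.diagonal v) i = C (v i) * X i := by
    intro i
    rw [F, Finset.sum_eq_single i]
    · simp
    · intro j _ hj; simp [Matrix.diagonal_apply_ne _ hj]
    · simp
  rw [symPowEntry_eq, aeval_monomial, map_one, one_mul, Finsupp.prod_pow]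
  simp_rw [hF, mul_pow]
  rw [Finset.prod_mul_distrib]
  simp_rw [← C_pow]
  rw [← map_prod, coeff_C_mul]
  have hX : ∏ i : Fin l, (X i : MvPolynomial (Fin l) ℤ) ^ toF c i = monomial (toF c) 1 := by
    rw [← prod_X_pow_eq_monomial]
    exact (Finset.prod_subset (Finset.subset_univ _) (fun x _ hx => by
      simp [Finsupp.notMem_support_iff.mp hx])).symm
  rw [hX, coeff_monomial]
  by_cases h : b = c
  · subst h
    simp [toF_apply]
  · rw [if_neg (fun he => h (toF_injective he.symm)), if_neg h, mul_zero]

end BlockPAux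

open BlockPAux in
lemma blockP_mul {l d : ℕ} (Y Z : Matrix (Fin l) (Fin l) ℤ) :
    blockP (d := d) (Y * Z) = blockP Y * blockP Z := by
  ext ⟨lam, f⟩ ⟨lam', f'⟩
  rw [Matrix.mul_apply,
    show (Finset.univ : Finset (PartIdx d l)) = Finset.univ.sigma fun _ => Finset.univ from
      Finset.univ_sigma_univ.symm, Finset.sum_sigma]
  by_cases h : lam = lam'
  · subst h
    rw [Finset.sum_eq_single_of_mem lam (Finset.mem_univ _)
      (fun b _ hb => Finset.sum_eq_zero fun g _ => by
        have hlb : ¬ lam = b := fun he => hb he.symm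
        simp [blockP, hlb])]
    simp only [blockP, dif_pos, cast_eq]
    simp_rw [symPowEntry_mul Y Z]
    rw [Fintype.prod_sum]
    exact Finset.sum_congr rfl fun g _ => Finset.prod_mul_distrib
  · simp only [blockP, dif_neg h]
    symm
    refine Finset.sum_eq_zero fun μ _ => Finset.sum_eq_zero fun g _ => ?_
    by_cases hμ : lam = μ
    · subst hμ
      have : lam ≠ lam' := h
      simp [blockP, this]
    · simp [blockP, hμ]

open BlockPAux in
lemma blockP_diagonal {l d : ℕ} (v : Fin l → ℤ) :
    blockP (d := d) (Matrix.diagonal v) =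
      Matrix.diagonal (fun q : PartIdx d l =>
        ∏ k : Fin l, v k ^ (∑ r : Fin (d + 1),
          Multiset.count k ((q.2 r : Multiset (Fin l))))) := by
  ext ⟨lam, f⟩ ⟨lam', f'⟩
  by_cases h : lam = lam'
  · subst h
    simp only [blockP, dif_pos, cast_eq]
    simp_rw [symPowEntry_diagonal]
    by_cases hf : f = f'
    · subst hf
      rw [Matrix.diagonal_apply_eq]
      simp only [eq_self_iff_true, if_true]
      rw [Finset.prod_comm]
      exact Finset.prod_congr rfl fun k _ => Finset.prod_pow_eq_pow_sum _ _ _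
    · rw [Matrix.diagonal_apply_ne _
        (fun he => hf (eq_of_heq (Sigma.mk.inj_iff.mp he).2))]
      obtain ⟨r, hr⟩ := Function.ne_iff.mp hf
      exact Finset.prod_eq_zero (Finset.mem_univ r) (if_neg hr)
  · rw [Matrix.diagonal_apply_ne _ (fun he => h (Sigma.mk.inj_iff.mp he).1)]
    simp [blockP, h]


lemma blockP_one {l d : ℕ} : blockP (d := d) (1 : Matrix (Fin l) (Fin l) ℤ) = 1 := by
  rw [show (1 : Matrix (Fin l) (Fin l) ℤ) = Matrix.diagonal (fun _ => 1) from
    Matrix.diagonal_one.symm, blockP_diagonal]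
  rw [show (fun q : PartIdx d l => ∏ k : Fin l, (1 : ℤ) ^ (∑ r : Fin (d + 1),
      Multiset.count k ((q.2 r : Multiset (Fin l))))) = fun _ => 1 from funext fun q => by simp,
    Matrix.diagonal_one]


/-- Let `X = (a_{ij})` be an `l × l` integer matrix and `Q̃, T̃` unimodular
integer matrices with `Q̃ X T̃ = diag(a_1, …, a_l)`.  Then
`P(Q̃) P(X) P(T̃) = P(diag(a_1, …, a_l))`, where `P(diag(a))` is the diagonal matrix whose
entry at the multipartition `(λ^{(1)}, …, λ^{(l)})` is `a_1^{ℓ(λ^{(1)})} ⋯ a_l^{ℓ(λ^{(l)})}`;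
in particular `P(Q̃)` and `P(T̃)` are unimodular, so these products are the invariant factors
of `P(X)`. -/
theorem blockP_conj (l d : ℕ) (Xm Qt Tt : Matrix (Fin l) (Fin l) ℤ) (a : Fin l → ℤ)
    (hQ : IsUnit Qt.det) (hT : IsUnit Tt.det)
    (hdiag : Qt * Xm * Tt = Matrix.diagonal a) :
    blockP (d := d) Qt * blockP Xm * blockP Tt = blockP (Matrix.diagonal a) ∧
      blockP (d := d) (Matrix.diagonal a) =
        Matrix.diagonal (fun q : PartIdx d l =>
          ∏ k : Fin l, a k ^ (∑ r : Fin (d + 1), Multiset.count k ((q.2 r : Multiset (Fin l))))) ∧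
      IsUnit (blockP (d := d) Qt).det ∧ IsUnit (blockP (d := d) Tt).det := by
  refine ⟨by rw [← blockP_mul, ← blockP_mul, hdiag], blockP_diagonal a, ?_, ?_⟩
  · obtain ⟨u, hu⟩ := (Matrix.isUnit_iff_isUnit_det Qt).mpr hQ
    exact Matrix.isUnit_det_of_right_inverse (B := blockP (d := d) (↑u⁻¹)) (by
      rw [← blockP_mul, ← hu, Units.mul_inv, blockP_one])
  · obtain ⟨u, hu⟩ := (Matrix.isUnit_iff_isUnit_det Tt).mpr hT
    exact Matrix.isUnit_det_of_right_inverse (B := blockP (d := d) (↑u⁻¹)) (by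
      rw [← blockP_mul, ← hu, Units.mul_inv, blockP_one])
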